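/- Let F and G be endofunctors of a category 𝒞 and μ : F ⟶ G a natural transformation. Suppose the forgetful functor U : Alg^G ⥤ 𝒞 from G-algebras has a left adjoint Fr (with unit η and counit ε), and that Alg^G has coequalizers. Then the pullback functor μ^* : Alg^G ⥤ Alg^F has a left adjoint μ_!, whose value at an F-algebra (A, α) is the coequalizer in Alg^G of the two morphisms Fr(α) and f̃ : Fr(F A) ⟶ Fr(A), where f̃ is the adjunct under Fr ⊣ U of the composite f = α_{Fr A} ∘ G(η_A) ∘ μ_A : F A ⟶ U(Fr A) (with α_{Fr A} : G(U(Fr A)) ⟶ U(Fr A) the structure map of the free G-algebra Fr A). -/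

import Mathlib

open CategoryTheory Limits

universe v u

namespace PaperStmt

variable {C : Type u} [Category.{v} C]

/-- The pullback of a `G`-algebra along a natural transformation `μ : F ⟶ G`:
it sends `(B, β)` to `(B, β ∘ μ_B)` and is the identity on morphisms. -/
@[simps]
def pullbackAlg {F G : C ⥤ C} (μ : F ⟶ G) :
    Endofunctor.Algebra G ⥤ Endofunctor.Algebra F where
  obj B := ⟨B.a, μ.app B.a ≫ B.str⟩
  map {A B} g := { f := g.f, h := by simp }

section Aux

variable {F G : C ⥤ C} (μ : F ⟶ G) (Fr : C ⥤ Endofunctor.Algebra G)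
  (adj0 : Fr ⊣ Endofunctor.Algebra.forget G)

/-- The second map in the coequalizer diagram. -/
def gTwo (A : Endofunctor.Algebra F) : Fr.obj (F.obj A.a) ⟶ Fr.obj A.a :=
  (adj0.homEquiv (F.obj A.a) (Fr.obj A.a)).symm
    (μ.app A.a ≫ G.map (adj0.unit.app A.a) ≫ (Fr.obj A.a).str)

lemma key (A : Endofunctor.Algebra F) (B : Endofunctor.Algebra G)
    (h : Fr.obj A.a ⟶ B) :
    adj0.homEquiv (F.obj A.a) B (gTwo μ Fr adj0 A ≫ h) =
      μ.app A.a ≫ G.map (adj0.homEquiv A.a B h) ≫ B.str := by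
  rw [Adjunction.homEquiv_naturality_right, gTwo, Equiv.apply_symm_apply,
    Adjunction.homEquiv_unit]
  simp [Endofunctor.Algebra.forget]

lemma cond_iff (A : Endofunctor.Algebra F) (B : Endofunctor.Algebra G)
    (h : Fr.obj A.a ⟶ B) :
    (Fr.map A.str ≫ h = gTwo μ Fr adj0 A ≫ h) ↔
      F.map (adj0.homEquiv A.a B h) ≫ (μ.app B.a ≫ B.str) =
        A.str ≫ adj0.homEquiv A.a B h := by
  rw [← Equiv.apply_eq_iff_eq (adj0.homEquiv (F.obj A.a) B),
    Adjunction.homEquiv_naturality_left, key]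
  erw [← μ.naturality_assoc]
  exact eq_comm

variable [HasCoequalizers (Endofunctor.Algebra G)]

/-- The object part of the left adjoint. -/
noncomputable def Lobj (A : Endofunctor.Algebra F) : Endofunctor.Algebra G :=
  coequalizer (Fr.map A.str) (gTwo μ Fr adj0 A)

/-- The hom-set equivalence. -/
noncomputable def eEquiv (A : Endofunctor.Algebra F) (B : Endofunctor.Algebra G) :
    (Lobj μ Fr adj0 A ⟶ B) ≃ (A ⟶ (pullbackAlg μ).obj B) where
  toFun t :=
    { f := adj0.homEquiv A.a B (coequalizer.π _ _ ≫ t)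
      h := by
        refine (cond_iff μ Fr adj0 A B (coequalizer.π _ _ ≫ t)).mp ?_
        erw [← Category.assoc, ← Category.assoc, coequalizer.condition] }
  invFun k :=
    coequalizer.desc ((adj0.homEquiv A.a B).symm k.f)
      (by
        refine (cond_iff μ Fr adj0 A B _).mpr ?_
        erw [Equiv.apply_symm_apply]
        exact k.h)
  left_inv t := by
    apply coequalizer.hom_ext
    simp
  right_inv k := by
    ext
    show adj0.homEquiv A.a B (coequalizer.π _ _ ≫ _) = k.f
    erw [coequalizer.π_desc, Equiv.apply_symm_apply]

lemma he (A : Endofunctor.Algebra F) (B B' : Endofunctor.Algebra G)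
    (g : B ⟶ B') (t : Lobj μ Fr adj0 A ⟶ B) :
    eEquiv μ Fr adj0 A B' (t ≫ g) =
      eEquiv μ Fr adj0 A B t ≫ (pullbackAlg μ).map g := by
  ext
  show adj0.homEquiv A.a B' (coequalizer.π _ _ ≫ (t ≫ g)) =
    adj0.homEquiv A.a B (coequalizer.π _ _ ≫ t) ≫ g.f
  erw [← Category.assoc, Adjunction.homEquiv_naturality_right]
  rfl

end Aux

/-- If the forgetful functor from `G`-algebras has a left adjoint `Fr`
and `Alg^G` has coequalizers, then the pullback functor `μ^* : Alg^G ⥤ Alg^F` has a left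
adjoint `μ_!` whose value at `(A, α)` is the coequalizer of `Fr(α)` and `f̃`, the adjunct of
`f = α_{Fr A} ∘ G(η_A) ∘ μ_A`. -/
theorem stmt0 {F G : C ⥤ C} (μ : F ⟶ G)
    (Fr : C ⥤ Endofunctor.Algebra G)
    (adj0 : Fr ⊣ Endofunctor.Algebra.forget G)
    [HasCoequalizers (Endofunctor.Algebra G)] :
    ∃ (L : Endofunctor.Algebra F ⥤ Endofunctor.Algebra G)
      (_ : L ⊣ pullbackAlg μ),
      ∀ A : Endofunctor.Algebra F,
        Nonempty (L.obj A ≅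
          coequalizer (Fr.map A.str)
            ((adj0.homEquiv (F.obj A.a) (Fr.obj A.a)).symm
              (μ.app A.a ≫ G.map (adj0.unit.app A.a) ≫ (Fr.obj A.a).str))) := by
  refine ⟨Adjunction.leftAdjointOfEquiv (eEquiv μ Fr adj0)
      (fun A B B' g t => he μ Fr adj0 A B B' g t),
    Adjunction.adjunctionOfEquivLeft _ _, fun A => ⟨Iso.refl _⟩⟩

end PaperStmt
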